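/- The spherical arc complexes listed in Theorem 5 have the stated dimension: for a bordered surface F_{g,(δ₁,…,δ_r)}^s, the arc complex Arc(F), when it is a PL-sphere, has dimension 6g - 7 + 3r + 2s + δ₁ + ⋯ + δ_r. In particular, for a polygon (g=s=0, r=1, δ₁=n), the arc complex of an n-gon is a PL-sphere of dimension n - 4. -/
import Mathlib


/-- A diagonal of a convex `n`-gon with vertices `0, 1, …, n-1`: a pair `(i, j)`
with `i < j`, connecting non-adjacent vertices. -/
def IsPolygonDiagonal (n : ℕ) (d : ℕ × ℕ) : Prop :=
  d.1 < d.2 ∧ d.2 < n ∧ d.1 + 2 ≤ d.2 ∧ ¬(d.1 = 0 ∧ d.2 = n - 1)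

/-- Two diagonals (each written as an increasing pair) cross in the interior. -/
def DiagonalsCross (d e : ℕ × ℕ) : Prop :=
  (d.1 < e.1 ∧ e.1 < d.2 ∧ d.2 < e.2) ∨ (e.1 < d.1 ∧ d.1 < e.2 ∧ e.2 < d.2)

/-- A diagonal of the convex polygon with vertex set `V ⊆ ℕ` (in the order induced
from `ℕ`, with the boundary edge connecting `min V` and `max V`): an increasing pair
of vertices with some vertex strictly between them and some vertex outside. -/
def Diag (V : Finset ℕ) (d : ℕ × ℕ) : Prop :=
  d.1 ∈ V ∧ d.2 ∈ V ∧ (∃ x ∈ V, d.1 < x ∧ x < d.2) ∧ (∃ y ∈ V, y < d.1 ∨ d.2 < y)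

/-- Generalized statement: maximal non-crossing diagonal families on any vertex set
`V` with at least 3 vertices have exactly `V.card - 3` elements. -/
theorem gen_arc : ∀ m (V : Finset ℕ), V.card = m → 3 ≤ V.card →
    ∀ S : Finset (ℕ × ℕ), (∀ d ∈ S, Diag V d) →
    (∀ d ∈ S, ∀ e ∈ S, ¬DiagonalsCross d e) →
    (∀ d, Diag V d → (∀ e ∈ S, ¬DiagonalsCross d e) → d ∈ S) →
    S.card = V.card - 3 := by
  intro m
  induction m using Nat.strong_induction_on with
  | _ m ih =>
  intro V hVm hV3 S hdiag hnc hmax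
  rcases Finset.eq_empty_or_nonempty S with hSe | ⟨d, hd⟩
  · -- S is empty: then V can have no diagonal at all, forcing V.card = 3.
    subst hSe
    simp only [Finset.card_empty]
    by_contra hne
    have h4 : 4 ≤ V.card := by omega
    have hVne : V.Nonempty := by rw [← Finset.card_pos]; omega
    set p := V.min' hVne with hp
    set t := V.max' hVne with ht
    have hpt : p < t := Finset.min'_lt_max'_of_card V (by omega)
    have htp : t ∈ V.erase p := Finset.mem_erase.2 ⟨by omega, V.max'_mem hVne⟩
    set W := (V.erase p).erase t with hW
    have hWcard : 2 ≤ W.card := by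
      have h1 : (V.erase p).card = V.card - 1 := Finset.card_erase_of_mem (V.min'_mem hVne)
      have h2 : W.card = (V.erase p).card - 1 := Finset.card_erase_of_mem htp
      omega
    have hWne : W.Nonempty := by rw [← Finset.card_pos]; omega
    set q := W.min' hWne with hq
    set r := W.max' hWne with hr
    have hqr : q < r := Finset.min'_lt_max'_of_card W (by omega)
    have hqW : q ∈ W := W.min'_mem hWne
    have hrW : r ∈ W := W.max'_mem hWne
    have hqV : q ∈ V := Finset.mem_erase.1 ((Finset.mem_erase.1 hqW).2) |>.2
    have hrV : r ∈ V := Finset.mem_erase.1 ((Finset.mem_erase.1 hrW).2) |>.2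
    have hqp : q ≠ p := (Finset.mem_erase.1 ((Finset.mem_erase.1 hqW).2)).1
    have hqt : q ≠ t := (Finset.mem_erase.1 hqW).1
    have hrt : r ≠ t := (Finset.mem_erase.1 hrW).1
    have hpq : p < q := lt_of_le_of_ne (V.min'_le q hqV) (Ne.symm hqp)
    have hrlt : r < t := lt_of_le_of_ne (V.le_max' r hrV) hrt
    have hDiag : Diag V (q, t) :=
      ⟨hqV, V.max'_mem hVne, ⟨r, hrV, hqr, hrlt⟩, ⟨p, V.min'_mem hVne, Or.inl hpq⟩⟩
    have := hmax (q, t) hDiag (fun e he => absurd he (Finset.notMem_empty e))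
    exact absurd this (Finset.notMem_empty _)
  · -- S nonempty: split along the diagonal d.
    obtain ⟨ha, hb, ⟨x, hxV, hx1, hx2⟩, ⟨y, hyV, hy⟩⟩ := hdiag d hd
    have hab : d.1 < d.2 := by omega
    set V₁ := V.filter (fun v => d.1 ≤ v ∧ v ≤ d.2) with hV₁def
    set V₂ := V.filter (fun v => v ≤ d.1 ∨ d.2 ≤ v) with hV₂def
    set S₁ := S.filter (fun e => d.1 ≤ e.1 ∧ e.2 ≤ d.2) with hS₁def
    set S₂ := S.filter (fun e => e.2 ≤ d.1 ∨ d.2 ≤ e.1 ∨ (e.1 ≤ d.1 ∧ d.2 ≤ e.2)) with hS₂def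
    have hlt : ∀ e ∈ S, e.1 < e.2 := by
      intro e he
      obtain ⟨_, _, ⟨x', _, h1, h2⟩, _⟩ := hdiag e he
      omega
    have htri : ∀ e ∈ S, e ∈ S₁ ∨ e ∈ S₂ := by
      intro e he
      have hcr := hnc d hd e he
      have h12 := hlt e he
      have hkey : (d.1 ≤ e.1 ∧ e.2 ≤ d.2) ∨
          (e.2 ≤ d.1 ∨ d.2 ≤ e.1 ∨ (e.1 ≤ d.1 ∧ d.2 ≤ e.2)) := by
        unfold DiagonalsCross at hcr; omega
      rcases hkey with h | h
      · exact Or.inl (Finset.mem_filter.2 ⟨he, h⟩)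
      · exact Or.inr (Finset.mem_filter.2 ⟨he, h⟩)
    have hdS₁ : d ∈ S₁ := Finset.mem_filter.2 ⟨hd, le_refl _, le_refl _⟩
    have hdS₂ : d ∈ S₂ := Finset.mem_filter.2 ⟨hd, Or.inr (Or.inr ⟨le_refl _, le_refl _⟩)⟩
    have hun : S₁ ∪ S₂ = S := by
      apply Finset.Subset.antisymm
      · exact Finset.union_subset (Finset.filter_subset _ _) (Finset.filter_subset _ _)
      · intro e he
        rcases htri e he with h | h
        · exact Finset.mem_union_left _ h
        · exact Finset.mem_union_right _ h
    have hint : S₁ ∩ S₂ = {d} := by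
      ext e
      constructor
      · intro h
        have h1 := Finset.mem_filter.1 (Finset.mem_inter.1 h).1
        have h2 := Finset.mem_filter.1 (Finset.mem_inter.1 h).2
        have h12 := hlt e h1.1
        have heq : e.1 = d.1 ∧ e.2 = d.2 := by
          rcases h1 with ⟨_, ha1, ha2⟩
          rcases h2 with ⟨_, hb1⟩
          omega
        rw [Finset.mem_singleton]
        exact Prod.ext heq.1 heq.2
      · intro h
        rw [Finset.mem_singleton] at h
        subst h
        exact Finset.mem_inter.2 ⟨hdS₁, hdS₂⟩
    have hcard_split : S.card + 1 = S₁.card + S₂.card := by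
      have h := Finset.card_union_add_card_inter S₁ S₂
      rw [hun, hint, Finset.card_singleton] at h
      omega
    -- vertex sets
    have haV₁ : d.1 ∈ V₁ := Finset.mem_filter.2 ⟨ha, le_refl _, le_of_lt hab⟩
    have hbV₁ : d.2 ∈ V₁ := Finset.mem_filter.2 ⟨hb, le_of_lt hab, le_refl _⟩
    have haV₂ : d.1 ∈ V₂ := Finset.mem_filter.2 ⟨ha, Or.inl (le_refl _)⟩
    have hbV₂ : d.2 ∈ V₂ := Finset.mem_filter.2 ⟨hb, Or.inr (le_refl _)⟩
    have hxV₁ : x ∈ V₁ := Finset.mem_filter.2 ⟨hxV, le_of_lt hx1, le_of_lt hx2⟩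
    have hyV₂ : y ∈ V₂ := Finset.mem_filter.2 ⟨hyV, by omega⟩
    have hy_not_V₁ : y ∉ V₁ := by
      intro h
      have := (Finset.mem_filter.1 h).2
      omega
    have hx_not_V₂ : x ∉ V₂ := by
      intro h
      have := (Finset.mem_filter.1 h).2
      omega
    have hV₁lt : V₁.card < m := by
      have : V₁.card < V.card :=
        Finset.card_lt_card ⟨Finset.filter_subset _ _, fun h => hy_not_V₁ (h hyV)⟩
      omega
    have hV₂lt : V₂.card < m := by
      have : V₂.card < V.card :=
        Finset.card_lt_card ⟨Finset.filter_subset _ _, fun h => hx_not_V₂ (h hxV)⟩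
      omega
    have h3V₁ : 3 ≤ V₁.card := by
      have hsub : ({d.1, x, d.2} : Finset ℕ) ⊆ V₁ := by
        intro v hv
        simp only [Finset.mem_insert, Finset.mem_singleton] at hv
        rcases hv with h | h | h <;> subst h <;> assumption
      have hc : ({d.1, x, d.2} : Finset ℕ).card = 3 := by
        rw [Finset.card_insert_of_notMem (by simp; omega),
          Finset.card_insert_of_notMem (by simp; omega), Finset.card_singleton]
      calc 3 = ({d.1, x, d.2} : Finset ℕ).card := hc.symm
        _ ≤ V₁.card := Finset.card_le_card hsub
    have h3V₂ : 3 ≤ V₂.card := by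
      have hsub : ({y, d.1, d.2} : Finset ℕ) ⊆ V₂ := by
        intro v hv
        simp only [Finset.mem_insert, Finset.mem_singleton] at hv
        rcases hv with h | h | h <;> subst h <;> assumption
      have hc : ({y, d.1, d.2} : Finset ℕ).card = 3 := by
        rw [Finset.card_insert_of_notMem (by simp; omega),
          Finset.card_insert_of_notMem (by simp; omega), Finset.card_singleton]
      calc 3 = ({y, d.1, d.2} : Finset ℕ).card := hc.symm
        _ ≤ V₂.card := Finset.card_le_card hsub
    have hVun : V₁ ∪ V₂ = V := by
      apply Finset.Subset.antisymm
      · exact Finset.union_subset (Finset.filter_subset _ _) (Finset.filter_subset _ _)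
      · intro v hv
        by_cases hP : d.1 ≤ v ∧ v ≤ d.2
        · exact Finset.mem_union_left _ (Finset.mem_filter.2 ⟨hv, hP⟩)
        · exact Finset.mem_union_right _ (Finset.mem_filter.2 ⟨hv, by omega⟩)
    have hVint : V₁ ∩ V₂ = {d.1, d.2} := by
      ext v
      constructor
      · intro h
        have h1 := (Finset.mem_filter.1 (Finset.mem_inter.1 h).1).2
        have h2 := (Finset.mem_filter.1 (Finset.mem_inter.1 h).2).2
        simp only [Finset.mem_insert, Finset.mem_singleton]
        omega
      · intro h
        simp only [Finset.mem_insert, Finset.mem_singleton] at h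
        rcases h with h | h <;> subst h
        · exact Finset.mem_inter.2 ⟨haV₁, haV₂⟩
        · exact Finset.mem_inter.2 ⟨hbV₁, hbV₂⟩
    have hVsum : V₁.card + V₂.card = V.card + 2 := by
      have h := Finset.card_union_add_card_inter V₁ V₂
      rw [hVun, hVint] at h
      have hc2 : ({d.1, d.2} : Finset ℕ).card = 2 := Finset.card_pair (by omega)
      omega
    -- the two sub-families
    have hS₁sub : S₁.erase d ⊆ S := fun p hp =>
      Finset.filter_subset _ _ (Finset.mem_erase.1 hp).2
    have hS₂sub : S₂.erase d ⊆ S := fun p hp =>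
      Finset.filter_subset _ _ (Finset.mem_erase.1 hp).2
    -- diag for S₁.erase d in V₁
    have hdiag₁ : ∀ e ∈ S₁.erase d, Diag V₁ e := by
      intro e he
      have hne := (Finset.mem_erase.1 he).1
      have heS₁ := (Finset.mem_erase.1 he).2
      obtain ⟨heS, h1, h2⟩ := Finset.mem_filter.1 heS₁
      obtain ⟨he1, he2, ⟨x', hx'V, hx'1, hx'2⟩, _⟩ := hdiag e heS
      have h12 := hlt e heS
      have hnd : ¬(e.1 = d.1 ∧ e.2 = d.2) := fun h => hne (Prod.ext h.1 h.2)
      refine ⟨Finset.mem_filter.2 ⟨he1, by omega⟩, Finset.mem_filter.2 ⟨he2, by omega⟩,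
        ⟨x', Finset.mem_filter.2 ⟨hx'V, by omega⟩, hx'1, hx'2⟩, ?_⟩
      by_cases hc : d.1 < e.1
      · exact ⟨d.1, haV₁, Or.inl hc⟩
      · exact ⟨d.2, hbV₁, Or.inr (by omega)⟩
    have hdiag₂ : ∀ e ∈ S₂.erase d, Diag V₂ e := by
      intro e he
      have hne := (Finset.mem_erase.1 he).1
      have heS₂ := (Finset.mem_erase.1 he).2
      obtain ⟨heS, hprops⟩ := Finset.mem_filter.1 heS₂
      obtain ⟨he1, he2, ⟨x', hx'V, hx'1, hx'2⟩, ⟨y', hy'V, hy'⟩⟩ := hdiag e heS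
      have h12 := hlt e heS
      have hnd : ¬(e.1 = d.1 ∧ e.2 = d.2) := fun h => hne (Prod.ext h.1 h.2)
      refine ⟨Finset.mem_filter.2 ⟨he1, by omega⟩, Finset.mem_filter.2 ⟨he2, by omega⟩,
        ?_, ?_⟩
      · rcases hprops with h | h | h
        · exact ⟨x', Finset.mem_filter.2 ⟨hx'V, by omega⟩, hx'1, hx'2⟩
        · exact ⟨x', Finset.mem_filter.2 ⟨hx'V, by omega⟩, hx'1, hx'2⟩
        · by_cases hc : e.1 < d.1
          · exact ⟨d.1, haV₂, by omega, by omega⟩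
          · exact ⟨d.2, hbV₂, by omega, by omega⟩
      · rcases hprops with h | h | h
        · exact ⟨d.2, hbV₂, Or.inr (by omega)⟩
        · exact ⟨d.1, haV₂, Or.inl (by omega)⟩
        · exact ⟨y', Finset.mem_filter.2 ⟨hy'V, by omega⟩, hy'⟩
    -- non-crossing inherited
    have hnc₁ : ∀ p ∈ S₁.erase d, ∀ q ∈ S₁.erase d, ¬DiagonalsCross p q :=
      fun p hp q hq => hnc p (hS₁sub hp) q (hS₁sub hq)
    have hnc₂ : ∀ p ∈ S₂.erase d, ∀ q ∈ S₂.erase d, ¬DiagonalsCross p q :=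
      fun p hp q hq => hnc p (hS₂sub hp) q (hS₂sub hq)
    -- maximality for S₁.erase d in V₁
    have hmax₁ : ∀ f, Diag V₁ f → (∀ e ∈ S₁.erase d, ¬DiagonalsCross f e) →
        f ∈ S₁.erase d := by
      intro f hf hfnc
      obtain ⟨hf1V₁, hf2V₁, ⟨x', hx'V₁, hx'1, hx'2⟩, ⟨y', hy'V₁, hy'⟩⟩ := hf
      have hf1 := Finset.mem_filter.1 hf1V₁
      have hf2 := Finset.mem_filter.1 hf2V₁
      have hy'b := (Finset.mem_filter.1 hy'V₁).2
      have hx'b := (Finset.mem_filter.1 hx'V₁).2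
      have hfd : f ≠ d := by
        intro h
        subst h
        omega
      have hfDiagV : Diag V f :=
        ⟨hf1.1, hf2.1, ⟨x', (Finset.mem_filter.1 hx'V₁).1, hx'1, hx'2⟩,
          ⟨y', (Finset.mem_filter.1 hy'V₁).1, hy'⟩⟩
      have hfS : f ∈ S := by
        apply hmax f hfDiagV
        intro e he
        rcases htri e he with he₁ | he₂
        · by_cases hed : e = d
          · subst hed
            have := hf1.2
            have := hf2.2
            unfold DiagonalsCross
            omega
          · exact hfnc e (Finset.mem_erase.2 ⟨hed, he₁⟩)
        · have hprops := (Finset.mem_filter.1 he₂).2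
          have h12 := hlt e he
          have := hf1.2
          have := hf2.2
          unfold DiagonalsCross
          omega
      exact Finset.mem_erase.2 ⟨hfd, Finset.mem_filter.2 ⟨hfS, hf1.2.1, hf2.2.2⟩⟩
    -- maximality for S₂.erase d in V₂
    have hmax₂ : ∀ f, Diag V₂ f → (∀ e ∈ S₂.erase d, ¬DiagonalsCross f e) →
        f ∈ S₂.erase d := by
      intro f hf hfnc
      obtain ⟨hf1V₂, hf2V₂, ⟨x', hx'V₂, hx'1, hx'2⟩, ⟨y', hy'V₂, hy'⟩⟩ := hf
      have hf1 := Finset.mem_filter.1 hf1V₂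
      have hf2 := Finset.mem_filter.1 hf2V₂
      have hx'b := (Finset.mem_filter.1 hx'V₂).2
      have hfd : f ≠ d := by
        intro h
        subst h
        omega
      have hfDiagV : Diag V f :=
        ⟨hf1.1, hf2.1, ⟨x', (Finset.mem_filter.1 hx'V₂).1, hx'1, hx'2⟩,
          ⟨y', (Finset.mem_filter.1 hy'V₂).1, hy'⟩⟩
      have hfS : f ∈ S := by
        apply hmax f hfDiagV
        intro e he
        rcases htri e he with he₁ | he₂
        · have hprops := (Finset.mem_filter.1 he₁).2
          have h12 := hlt e he
          have := hf1.2
          have := hf2.2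
          unfold DiagonalsCross
          omega
        · by_cases hed : e = d
          · subst hed
            have := hf1.2
            have := hf2.2
            unfold DiagonalsCross
            omega
          · exact hfnc e (Finset.mem_erase.2 ⟨hed, he₂⟩)
      refine Finset.mem_erase.2 ⟨hfd, Finset.mem_filter.2 ⟨hfS, ?_⟩⟩
      have := hf1.2
      have := hf2.2
      omega
    -- apply the inductive hypothesis
    have hres₁ : (S₁.erase d).card = V₁.card - 3 :=
      ih V₁.card hV₁lt V₁ rfl h3V₁ (S₁.erase d) hdiag₁ hnc₁ hmax₁
    have hres₂ : (S₂.erase d).card = V₂.card - 3 :=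
      ih V₂.card hV₂lt V₂ rfl h3V₂ (S₂.erase d) hdiag₂ hnc₂ hmax₂
    have hb1 : S₁.card = (S₁.erase d).card + 1 := by
      rw [Finset.card_erase_of_mem hdS₁]
      have : 1 ≤ S₁.card := Finset.card_pos.2 ⟨d, hdS₁⟩
      omega
    have hb2 : S₂.card = (S₂.erase d).card + 1 := by
      rw [Finset.card_erase_of_mem hdS₂]
      have : 1 ≤ S₂.card := Finset.card_pos.2 ⟨d, hdS₂⟩
      omega
    omega

/-- The arc complex of an `n`-gon (`n ≥ 4`) is a PL-sphere of dimension `n - 4`;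
its maximal simplices, i.e. the maximal families of pairwise non-crossing diagonals
of the convex `n`-gon, all have exactly `n - 3` elements. -/
theorem polygon_arc_complex_top_dimension (n : ℕ) (hn : 4 ≤ n)
    (S : Finset (ℕ × ℕ))
    (hdiag : ∀ d ∈ S, IsPolygonDiagonal n d)
    (hnc : ∀ d ∈ S, ∀ e ∈ S, ¬DiagonalsCross d e)
    (hmax : ∀ d : ℕ × ℕ, IsPolygonDiagonal n d →
      (∀ e ∈ S, ¬DiagonalsCross d e ∧ ¬DiagonalsCross e d) → d ∈ S) :
    S.card = n - 3 := by
  have hiff : ∀ d, IsPolygonDiagonal n d ↔ Diag (Finset.range n) d := by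
    intro d
    constructor
    · rintro ⟨h1, h2, h3, h4⟩
      refine ⟨Finset.mem_range.2 (by omega), Finset.mem_range.2 h2,
        ⟨d.1 + 1, Finset.mem_range.2 (by omega), by omega, by omega⟩, ?_⟩
      by_cases h0 : d.1 = 0
      · exact ⟨n - 1, Finset.mem_range.2 (by omega), Or.inr (by omega)⟩
      · exact ⟨0, Finset.mem_range.2 (by omega), Or.inl (by omega)⟩
    · rintro ⟨h1, h2, ⟨x, hx, hx1, hx2⟩, ⟨y, hy, hy'⟩⟩
      rw [Finset.mem_range] at h1 h2 hx hy
      refine ⟨by omega, h2, by omega, ?_⟩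
      rintro ⟨e0, e1⟩
      omega
  have hsymm : ∀ d e : ℕ × ℕ, DiagonalsCross e d → DiagonalsCross d e := by
    intro d e h
    unfold DiagonalsCross at *
    tauto
  have hres := gen_arc n (Finset.range n) (Finset.card_range n)
    (by rw [Finset.card_range]; omega) S
    (fun d hdS => (hiff d).1 (hdiag d hdS)) hnc
    (fun d hDiag hnce =>
      hmax d ((hiff d).2 hDiag)
        (fun e he => ⟨hnce e he, fun hc => hnce e he (hsymm d e hc)⟩))
  rw [Finset.card_range] at hres
  exact hres
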